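/- Let F be a continuous CDF on [0,∞) with F(0) = 0, let F^{*(k)} denote its k-fold convolution, and let p ∈ (0,1). If p = 1/2, then Σ_{j=0}^{∞} (1 − F^{*(j+1)}(t)) (1−p)^j p = Σ_{j=0}^{∞} (1 − F^{*(j+1)}(t)) p^j (1−p) for all t ≥ 0. If p > 1/2, then for every t > 0 with F(t) ∈ (0,1), Σ_{j=0}^{∞} (1 − F^{*(j+1)}(t)) (1−p)^j p − (1−F(t)) p < Σ_{j=0}^{∞} (1 − F^{*(j+1)}(t)) p^j (1−p) − (1−F(t)) (1−p), and the reverse strict inequality holds if p < 1/2. -/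

import Mathlib

open MeasureTheory Filter

/-- The iterated convolution of a CDF `F` with itself:
`Fconv F n = F^{*(n+1)}`, with `F^{*(1)} = F` and
`F^{*(k+1)}(t) = ∫₀ᵗ F^{*(k)}(t−s) dF(s)`. -/
noncomputable def Fconv (F : StieltjesFunction ℝ) : ℕ → ℝ → ℝ
  | 0 => fun t => F t
  | (n + 1) => fun t => ∫ s in Set.Icc 0 t, Fconv F n (t - s) ∂F.measure

lemma Fconv_props (F : StieltjesFunction ℝ)
    (hF_zero : ∀ t : ℝ, t ≤ 0 → F t = 0) (hF_le : ∀ t : ℝ, F t ≤ 1) :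
    ∀ n : ℕ, Measurable (Fconv F n) ∧
      ∀ x : ℝ, 0 ≤ Fconv F n x ∧ Fconv F n x ≤ (F x) ^ (n + 1) := by
  have hF0 : ∀ x : ℝ, 0 ≤ F x := by
    intro x
    rcases le_or_gt x 0 with h | h
    · exact (hF_zero x h).ge
    · rw [← hF_zero 0 le_rfl]; exact F.mono h.le
  have hleft : Function.leftLim (F : ℝ → ℝ) 0 = 0 := by
    apply leftLim_eq_of_tendsto (h := nhdsLT_neBot (0:ℝ))
    have heq : (F : ℝ → ℝ) =ᶠ[nhdsWithin 0 (Set.Iio 0)] fun _ => (0 : ℝ) :=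
      eventually_mem_nhdsWithin.mono fun x hx => hF_zero x (le_of_lt hx)
    exact Tendsto.congr' heq.symm tendsto_const_nhds
  intro n
  induction n with
  | zero =>
    refine ⟨F.mono.measurable, fun x => ⟨hF0 x, by simp [Fconv]⟩⟩
  | succ n IH =>
    obtain ⟨hmeas, hbd⟩ := IH
    have hFle1 : ∀ y : ℝ, Fconv F n y ≤ 1 := fun y =>
      le_trans (hbd y).2 (pow_le_one₀ (hF0 y) (hF_le y))
    -- measurability
    have hjm : Measurable fun q : ℝ × ℝ =>
        Set.indicator {q : ℝ × ℝ | q.2 ∈ Set.Icc 0 q.1}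
          (fun q : ℝ × ℝ => Fconv F n (q.1 - q.2)) q := by
      apply Measurable.indicator
      · exact hmeas.comp (measurable_fst.sub measurable_snd)
      · have : {q : ℝ × ℝ | q.2 ∈ Set.Icc 0 q.1}
            = {q : ℝ × ℝ | 0 ≤ q.2} ∩ {q : ℝ × ℝ | q.2 ≤ q.1} := by
          ext q; simp [Set.mem_Icc]
        rw [this]
        exact (measurableSet_le measurable_const measurable_snd).inter
          (measurableSet_le measurable_snd measurable_fst)
    have hmeas' : Measurable (Fconv F (n + 1)) := by
      have h1 := (hjm.stronglyMeasurable).integral_prod_right' (ν := F.measure)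
      have hptw : ∀ t s : ℝ, Set.indicator (Set.Icc 0 t)
          (fun s => Fconv F n (t - s)) s
          = Set.indicator {q : ℝ × ℝ | q.2 ∈ Set.Icc 0 q.1}
            (fun q : ℝ × ℝ => Fconv F n (q.1 - q.2)) (t, s) := by
        intro t s
        by_cases hs : s ∈ Set.Icc 0 t
        · rw [Set.indicator_of_mem hs, Set.indicator_of_mem (by exact hs)]
        · rw [Set.indicator_of_notMem hs, Set.indicator_of_notMem (by exact hs)]
      have h2 : (Fconv F (n + 1)) = fun t => ∫ s,
          Set.indicator {q : ℝ × ℝ | q.2 ∈ Set.Icc 0 q.1}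
            (fun q : ℝ × ℝ => Fconv F n (q.1 - q.2)) (t, s) ∂F.measure := by
        funext t
        show (∫ s in Set.Icc 0 t, Fconv F n (t - s) ∂F.measure) = _
        rw [← integral_indicator measurableSet_Icc]
        exact integral_congr_ae (ae_of_all _ (hptw t))
      rw [h2]
      exact h1.measurable
    refine ⟨hmeas', fun x => ?_⟩
    have hintg : IntegrableOn (fun s => Fconv F n (x - s)) (Set.Icc 0 x) F.measure := by
      refine Integrable.mono' (g := fun _ => (1 : ℝ))
        (integrableOn_const isCompact_Icc.measure_lt_top.ne)
        ((hmeas.comp (measurable_const.sub measurable_id)).aestronglyMeasurable) ?_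
      refine ae_of_all _ fun s => ?_
      rw [Real.norm_eq_abs, abs_of_nonneg (hbd _).1]
      exact hFle1 _
    constructor
    · show 0 ≤ ∫ s in Set.Icc 0 x, Fconv F n (x - s) ∂F.measure
      exact setIntegral_nonneg measurableSet_Icc fun s _ => (hbd _).1
    · show (∫ s in Set.Icc 0 x, Fconv F n (x - s) ∂F.measure) ≤ (F x) ^ (n + 1 + 1)
      have h1 : (∫ s in Set.Icc 0 x, Fconv F n (x - s) ∂F.measure)
          ≤ ∫ _ in Set.Icc 0 x, (F x) ^ (n + 1) ∂F.measure := by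
        refine setIntegral_mono_on hintg
          (integrableOn_const isCompact_Icc.measure_lt_top.ne)
          measurableSet_Icc fun s hs => ?_
        exact le_trans (hbd _).2
          (pow_le_pow_left₀ (hF0 _) (F.mono (by linarith [hs.1])) _)
      have h2 : (∫ _ in Set.Icc 0 x, (F x) ^ (n + 1) ∂F.measure)
          = (F.measure (Set.Icc 0 x)).toReal * (F x) ^ (n + 1) := by
        rw [setIntegral_const]; rfl
      have h3 : (F.measure (Set.Icc 0 x)).toReal ≤ F x := by
        rw [F.measure_Icc, hleft, sub_zero]
        rcases le_or_gt 0 (F x) with h | h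
        · rw [ENNReal.toReal_ofReal h]
        · exact absurd h (not_lt.2 (hF0 x))
      calc (∫ s in Set.Icc 0 x, Fconv F n (x - s) ∂F.measure)
          ≤ (F.measure (Set.Icc 0 x)).toReal * (F x) ^ (n + 1) := h1.trans h2.le
        _ ≤ F x * (F x) ^ (n + 1) := by
            exact mul_le_mul_of_nonneg_right h3 (pow_nonneg (hF0 x) _)
        _ = (F x) ^ (n + 1 + 1) := by ring

lemma geom_compound_lt (c : ℕ → ℝ) (hc0 : ∀ j, 0 ≤ c j) (hc1 : ∀ j, c j ≤ 1)
    (hc2 : 0 < c 2) (p : ℝ) (hp0 : 0 < p) (hp1 : p < 1) (hhalf : 1 / 2 < p) :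
    (∑' j : ℕ, c j * (1 - p) ^ j * p) - c 0 * p <
      (∑' j : ℕ, c j * p ^ j * (1 - p)) - c 0 * (1 - p) := by
  have hq0 : 0 < 1 - p := by linarith
  set a : ℕ → ℝ := fun j => c j * (1 - p) ^ j * p with ha
  set b : ℕ → ℝ := fun j => c j * p ^ j * (1 - p) with hb
  have hna : ∀ j, 0 ≤ a j := fun j =>
    mul_nonneg (mul_nonneg (hc0 j) (pow_nonneg hq0.le j)) hp0.le
  have hnb : ∀ j, 0 ≤ b j := fun j =>
    mul_nonneg (mul_nonneg (hc0 j) (pow_nonneg hp0.le j)) hq0.le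
  have hsa : Summable a := by
    refine Summable.of_nonneg_of_le hna (fun j => ?_)
      (summable_geometric_of_lt_one hq0.le (by linarith))
    have h1 : c j * p ≤ 1 := by nlinarith [hc0 j, hc1 j]
    show c j * (1 - p) ^ j * p ≤ (1 - p) ^ j
    nlinarith [mul_nonneg (pow_nonneg hq0.le j) (by linarith : (0:ℝ) ≤ 1 - c j * p)]
  have hsb : Summable b := by
    refine Summable.of_nonneg_of_le hnb (fun j => ?_)
      (summable_geometric_of_lt_one hp0.le hp1)
    have h1 : c j * (1 - p) ≤ 1 := by nlinarith [hc0 j, hc1 j]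
    show c j * p ^ j * (1 - p) ≤ p ^ j
    nlinarith [mul_nonneg (pow_nonneg hp0.le j) (by linarith : (0:ℝ) ≤ 1 - c j * (1 - p))]
  have key : ∀ j : ℕ, a (j + 1) ≤ b (j + 1) := by
    intro j
    have hpow : (1 - p) ^ j ≤ p ^ j := pow_le_pow_left₀ hq0.le (by linarith) j
    have h1 : (1 - p) ^ (j + 1) * p ≤ p ^ (j + 1) * (1 - p) := by
      rw [pow_succ, pow_succ]
      nlinarith [mul_le_mul_of_nonneg_right hpow (mul_nonneg hq0.le hp0.le)]
    calc a (j + 1) = c (j + 1) * ((1 - p) ^ (j + 1) * p) := by ring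
      _ ≤ c (j + 1) * (p ^ (j + 1) * (1 - p)) :=
          mul_le_mul_of_nonneg_left h1 (hc0 _)
      _ = b (j + 1) := by ring
  have hstrict : a 2 < b 2 := by
    show c 2 * (1 - p) ^ 2 * p < c 2 * p ^ 2 * (1 - p)
    nlinarith [mul_pos hc2 (mul_pos (mul_pos hp0 hq0)
      (show (0:ℝ) < 2 * p - 1 by linarith))]
  have hmain : (∑' j : ℕ, a (j + 1)) < ∑' j : ℕ, b (j + 1) := by
    refine Summable.tsum_lt_tsum_of_nonneg (i := 1) (fun j => hna _) key hstrict ?_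
    exact (summable_nat_add_iff 1).2 hsb
  have hA : (∑' j : ℕ, a j) = a 0 + ∑' j : ℕ, a (j + 1) := Summable.tsum_eq_zero_add hsa
  have hB : (∑' j : ℕ, b j) = b 0 + ∑' j : ℕ, b (j + 1) := Summable.tsum_eq_zero_add hsb
  have ha0 : a 0 = c 0 * p := by simp [ha]
  have hb0 : b 0 = c 0 * (1 - p) := by simp [hb]
  rw [hA, hB, ha0, hb0]
  linarith

/-- Comparison of geometric-compound survival functions. Let `F` be a continuous CDF on
`[0,∞)` with `F(0) = 0` and let `p ∈ (0,1)`. If `p = 1/2`, the two compound-geometric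
survival series coincide; if `p > 1/2`, the stated strict inequality holds at every `t > 0`
with `F(t) ∈ (0,1)`, and the reverse strict inequality holds if `p < 1/2`. -/
theorem compound_geometric_survival_comparison
    (F : StieltjesFunction ℝ) (hF_cont : Continuous F)
    (hF_zero : ∀ t : ℝ, t ≤ 0 → F t = 0)
    (hF_top : Tendsto (F : ℝ → ℝ) atTop (nhds 1))
    (p : ℝ) (hp : p ∈ Set.Ioo (0 : ℝ) 1) :
    (p = 1 / 2 → ∀ t : ℝ, 0 ≤ t →
      (∑' j : ℕ, (1 - Fconv F j t) * (1 - p) ^ j * p) =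
        ∑' j : ℕ, (1 - Fconv F j t) * p ^ j * (1 - p)) ∧
    (1 / 2 < p → ∀ t : ℝ, 0 < t → F t ∈ Set.Ioo (0 : ℝ) 1 →
      (∑' j : ℕ, (1 - Fconv F j t) * (1 - p) ^ j * p) - (1 - F t) * p <
        (∑' j : ℕ, (1 - Fconv F j t) * p ^ j * (1 - p)) - (1 - F t) * (1 - p)) ∧
    (p < 1 / 2 → ∀ t : ℝ, 0 < t → F t ∈ Set.Ioo (0 : ℝ) 1 →
      (∑' j : ℕ, (1 - Fconv F j t) * p ^ j * (1 - p)) - (1 - F t) * (1 - p) <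
        (∑' j : ℕ, (1 - Fconv F j t) * (1 - p) ^ j * p) - (1 - F t) * p) := by
  obtain ⟨hp0, hp1⟩ := hp
  have hF_le : ∀ t : ℝ, F t ≤ 1 := fun t => F.mono.ge_of_tendsto hF_top t
  have hprops := Fconv_props F hF_zero hF_le
  refine ⟨?_, ?_, ?_⟩
  · rintro rfl t _
    norm_num
  · intro hhalf t ht hFt
    have hc0 : ∀ j, 0 ≤ 1 - Fconv F j t := fun j => by
      have := ((hprops j).2 t).2
      have h2 : (F t) ^ (j + 1) ≤ 1 := pow_le_one₀ (le_of_lt hFt.1) (hF_le t)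
      linarith
    have hc1 : ∀ j, 1 - Fconv F j t ≤ 1 := fun j => by
      have := ((hprops j).2 t).1; linarith
    have hc2 : 0 < 1 - Fconv F 2 t := by
      have h1 := ((hprops 2).2 t).2
      have h2 : (F t) ^ (2 + 1) < 1 :=
        pow_lt_one₀ (le_of_lt hFt.1) hFt.2 (by norm_num)
      linarith
    have h := geom_compound_lt (fun j => 1 - Fconv F j t) hc0 hc1 hc2 p hp0 hp1 hhalf
    simpa [Fconv] using h
  · intro hhalf t ht hFt
    have hc0 : ∀ j, 0 ≤ 1 - Fconv F j t := fun j => by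
      have := ((hprops j).2 t).2
      have h2 : (F t) ^ (j + 1) ≤ 1 := pow_le_one₀ (le_of_lt hFt.1) (hF_le t)
      linarith
    have hc1 : ∀ j, 1 - Fconv F j t ≤ 1 := fun j => by
      have := ((hprops j).2 t).1; linarith
    have hc2 : 0 < 1 - Fconv F 2 t := by
      have h1 := ((hprops 2).2 t).2
      have h2 : (F t) ^ (2 + 1) < 1 :=
        pow_lt_one₀ (le_of_lt hFt.1) hFt.2 (by norm_num)
      linarith
    have h := geom_compound_lt (fun j => 1 - Fconv F j t) hc0 hc1 hc2 (1 - p)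
      (by linarith) (by linarith) (by linarith)
    have e : 1 - (1 - p) = p := by ring
    rw [e] at h
    simpa [Fconv] using h
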